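/- For the 2D ACC atomistic contribution a_b of a bond b = (i,i+r), whose intersection pattern with Ω_a is encoded by 0 = t₀ < t₁ < ⋯ < t_M = 1 and constant weights w_m = χ_{Ω_a}(i+rt) on (t_{m−1}, t_m), the variation at the uniform deformation y = Fx satisfies a_b'(Fx; v) + c_b'(Fx; v) = ∇φ(Fr)·(v_{i+r} − v_i) = e_b'(Fx; v), where c_b(y) := ⨍_b χ_{Ω_c} φ(D_r y) db. -/

import Mathlib

open MeasureTheory

/-- Embedding of the lattice `ℤ²` into `ℝ²`. -/
noncomputable def c2 (i : ℤ × ℤ) : ℝ × ℝ := ((i.1 : ℝ), (i.2 : ℝ))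

/-- One-sided directional derivative `D_r v (x)` of a vector-valued function. -/
noncomputable def Dr (r : ℝ × ℝ) (v : ℝ × ℝ → ℝ × ℝ) (x : ℝ × ℝ) : ℝ × ℝ :=
  derivWithin (fun s : ℝ => v (x + s • r)) (Set.Ioi (0 : ℝ)) 0

/-- For the 2D ACC atomistic contribution `a_b` of a bond `b = (i, i+r)`, whose intersection
pattern with `Ω_a` is encoded by `0 = t₀ < t₁ < ⋯ < t_M = 1` and constant weights
`w_m = χ_{Ω_a}` on `(t_{m−1}, t_m)` (with `χ_{Ω_a} + χ_{Ω_c} = 1` along the bond, so that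
`χ_{Ω_c} = 1 − w` there), the variation at the uniform deformation `y = Fx` satisfies
`a_b'(Fx; v) + c_b'(Fx; v) = ∇φ(Fr)·(v_{i+r} − v_i) = e_b'(Fx; v)`, where
`c_b(y) = ⨍_b χ_{Ω_c} φ(D_r y) db`. -/
theorem acc_variation_2d
    (φ : ℝ × ℝ → ℝ) (hφ : ContDiff ℝ 1 φ) (F : (ℝ × ℝ) →ₗ[ℝ] (ℝ × ℝ))
    (i r : ℤ × ℤ) (hr : r ≠ 0)
    (v : ℝ × ℝ → ℝ × ℝ) (hvcont : Continuous v)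
    (M : ℕ) (t : Fin (M + 1) → ℝ) (ht : StrictMono t)
    (ht0 : t 0 = 0) (ht1 : t (Fin.last M) = 1)
    (w : Fin M → ℝ) (hw : ∀ m, w m ∈ Set.Icc (0:ℝ) 1)
    (wfun : ℝ → ℝ)
    (hwfun : ∀ m : Fin M, ∀ l ∈ Set.Ioo (t m.castSucc) (t m.succ), wfun l = w m)
    (haff : ∀ m : Fin M, ∃ a c : ℝ × ℝ,
      ∀ l ∈ Set.Icc (t m.castSucc) (t m.succ), v (c2 i + l • c2 r) = l • a + c)
    (L : ℝ) (hL : L = ∑ m, w m * (t m.succ - t m.castSucc)) (hLpos : 0 < L) :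
    HasDerivAt
        (fun s : ℝ =>
          L * φ (L⁻¹ • ∑ m, w m •
              (((F (c2 i + t m.succ • c2 r) + s • v (c2 i + t m.succ • c2 r))
                - (F (c2 i + t m.castSucc • c2 r) + s • v (c2 i + t m.castSucc • c2 r)))))
          + ∫ l in (0:ℝ)..1,
              (1 - wfun l) * φ (F (c2 r) + s • Dr (c2 r) v (c2 i + l • c2 r)))
        (fderiv ℝ φ (F (c2 r)) (v (c2 (i + r)) - v (c2 i))) 0
      ∧ HasDerivAt
        (fun s : ℝ =>
          φ ((F (c2 (i + r)) + s • v (c2 (i + r))) - (F (c2 i) + s • v (c2 i))))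
        (fderiv ℝ φ (F (c2 r)) (v (c2 (i + r)) - v (c2 i))) 0 := by
  
  classical
  have hc2add : c2 (i + r) = c2 i + c2 r := by simp [c2, Prod.ext_iff]
  set Fr := F (c2 r) with hFr
  set D := fderiv ℝ φ Fr with hD
  choose a cc hac using haff
  -- chain rule helper
  have hchain : ∀ u : ℝ × ℝ, HasDerivAt (fun s : ℝ => φ (Fr + s • u)) (D u) 0 := by
    intro u
    have h1 : HasDerivAt (fun s : ℝ => Fr + s • u) u 0 := by
      simpa using ((hasDerivAt_id (0:ℝ)).smul_const u).const_add Fr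
    have h2 := (hφ.differentiable one_ne_zero (Fr + (0:ℝ) • u)).hasFDerivAt
    simpa [hD, Function.comp_def] using h2.comp_hasDerivAt 0 h1
  -- ordering of the breakpoints
  have htlt : ∀ m : Fin M, t m.castSucc < t m.succ := fun m => ht Fin.castSucc_lt_succ
  -- endpoint differences
  have hvdiff : ∀ m : Fin M,
      v (c2 i + t m.succ • c2 r) - v (c2 i + t m.castSucc • c2 r)
        = (t m.succ - t m.castSucc) • a m := by
    intro m
    rw [hac m _ ⟨(htlt m).le, le_rfl⟩, hac m _ ⟨le_rfl, (htlt m).le⟩, sub_smul]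
    abel
  have hFdiff : ∀ m : Fin M,
      F (c2 i + t m.succ • c2 r) - F (c2 i + t m.castSucc • c2 r)
        = (t m.succ - t m.castSucc) • Fr := by
    intro m
    rw [map_add, map_add, _root_.map_smul, _root_.map_smul, sub_smul]
    abel
  -- Dr computation
  have hDr : ∀ m : Fin M, ∀ l ∈ Set.Ioo (t m.castSucc) (t m.succ),
      Dr (c2 r) v (c2 i + l • c2 r) = a m := by
    intro m l hl
    have h1 : HasDerivAt (fun s : ℝ => (l + s) • a m + cc m) (a m) 0 := by
      simpa using (((hasDerivAt_id (0:ℝ)).const_add l).smul_const (a m)).add_const (cc m)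
    have h2 : HasDerivWithinAt (fun s : ℝ => v (c2 i + l • c2 r + s • c2 r)) (a m)
        (Set.Ioi 0) 0 := by
      refine (h1.hasDerivWithinAt).congr_of_eventuallyEq ?_ ?_
      · have hmem : Set.Iio (t m.succ - l) ∈ nhdsWithin (0:ℝ) (Set.Ioi 0) :=
          mem_nhdsWithin_of_mem_nhds (Iio_mem_nhds (by linarith [hl.2]))
        filter_upwards [hmem, self_mem_nhdsWithin] with s hs1 hs2
        have heq : c2 i + l • c2 r + s • c2 r = c2 i + (l + s) • c2 r := by
          rw [add_smul]; abel
        rw [heq, hac m (l + s) ⟨by linarith [hl.1, Set.mem_Ioi.1 hs2],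
          by linarith [Set.mem_Iio.1 hs1]⟩]
      · simpa using hac m l ⟨hl.1.le, hl.2.le⟩
    exact h2.derivWithin (uniqueDiffWithinAt_Ioi 0)
  -- natural-number reindexing of breakpoints
  set τ : ℕ → ℝ := fun k => t ⟨min k M, Nat.lt_succ_of_le (min_le_right k M)⟩ with hτdef
  have hτ : ∀ k (hk : k ≤ M), τ k = t ⟨k, Nat.lt_succ_of_le hk⟩ := by
    intro k hk
    exact congrArg t (Fin.ext (Nat.min_eq_left hk))
  have hτc : ∀ m : Fin M, τ m.1 = t m.castSucc := by
    intro m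
    rw [hτ m.1 m.2.le]
    rfl
  have hτs : ∀ m : Fin M, τ (m.1 + 1) = t m.succ := by
    intro m
    rw [hτ (m.1 + 1) m.2]
    rfl
  have hτ0 : τ 0 = 0 := by rw [hτ 0 (Nat.zero_le M), ← ht0]; rfl
  have hτM : τ M = 1 := by rw [hτ M le_rfl, ← ht1]; rfl
  -- a.e. avoidance of a single point
  have hne : ∀ c : ℝ, ∀ᵐ x : ℝ, x ≠ c := by
    intro c
    rw [ae_iff]
    simpa using volume_singleton (a := c)
  -- the integral as a finite sum, for every s
  have hsum : ∀ s : ℝ,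
      (∫ l in (0:ℝ)..1, (1 - wfun l) * φ (Fr + s • Dr (c2 r) v (c2 i + l • c2 r)))
        = ∑ m : Fin M, (t m.succ - t m.castSucc) * ((1 - w m) * φ (Fr + s • a m)) := by
    intro s
    set g : ℝ → ℝ := fun l => (1 - wfun l) * φ (Fr + s • Dr (c2 r) v (c2 i + l • c2 r))
      with hg
    have hconst : ∀ m : Fin M, ∀ l ∈ Set.Ioo (t m.castSucc) (t m.succ),
        g l = (1 - w m) * φ (Fr + s • a m) := by
      intro m l hl
      rw [hg]
      simp only [hwfun m l hl, hDr m l hl]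
    have hintg : ∀ m : Fin M, IntervalIntegrable g volume (t m.castSucc) (t m.succ) := by
      intro m
      rw [intervalIntegrable_iff]
      have hco : IntegrableOn (fun _ : ℝ => (1 - w m) * φ (Fr + s • a m))
          (Set.uIoc (t m.castSucc) (t m.succ)) volume := by
        refine integrableOn_const (ne_of_lt ?_)
        rw [Set.uIoc_of_le (htlt m).le]
        exact measure_Ioc_lt_top
      refine hco.congr ?_
      filter_upwards [ae_restrict_mem measurableSet_uIoc,
        ae_restrict_of_ae (hne (t m.succ))] with x h1 h2
      rw [Set.uIoc_of_le (htlt m).le] at h1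
      exact (hconst m x ⟨h1.1, lt_of_le_of_ne h1.2 h2⟩).symm
    have hint : ∀ m : Fin M, (∫ l in (t m.castSucc)..(t m.succ), g l)
        = (t m.succ - t m.castSucc) * ((1 - w m) * φ (Fr + s • a m)) := by
      intro m
      rw [intervalIntegral.integral_congr_ae
        (g := fun _ => (1 - w m) * φ (Fr + s • a m)) ?_]
      · rw [intervalIntegral.integral_const, smul_eq_mul]
      · filter_upwards [hne (t m.succ)] with x hx hxI
        rw [Set.uIoc_of_le (htlt m).le] at hxI
        exact hconst m x ⟨hxI.1, lt_of_le_of_ne hxI.2 hx⟩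
    have hadj : ∑ k ∈ Finset.range M, (∫ x in (τ k)..(τ (k+1)), g x)
        = ∫ x in (τ 0)..(τ M), g x := by
      refine intervalIntegral.sum_integral_adjacent_intervals ?_
      intro k hk
      have hkk : τ k = t (⟨k, hk⟩ : Fin M).castSucc := hτc ⟨k, hk⟩
      have hkk1 : τ (k+1) = t (⟨k, hk⟩ : Fin M).succ := hτs ⟨k, hk⟩
      rw [hkk, hkk1]
      exact hintg ⟨k, hk⟩
    rw [hτ0, hτM] at hadj
    rw [← hadj, ← Fin.sum_univ_eq_sum_range (fun k => ∫ x in (τ k)..(τ (k+1)), g x) M]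
    refine Finset.sum_congr rfl fun m _ => ?_
    rw [hτc m, hτs m]
    exact hint m
  -- rewriting the atomistic term
  set CV : ℝ × ℝ := ∑ m, w m • (v (c2 i + t m.succ • c2 r) - v (c2 i + t m.castSucc • c2 r))
    with hCV
  have hAeq : ∀ s : ℝ,
      (L⁻¹ • ∑ m, w m •
          (((F (c2 i + t m.succ • c2 r) + s • v (c2 i + t m.succ • c2 r))
            - (F (c2 i + t m.castSucc • c2 r) + s • v (c2 i + t m.castSucc • c2 r)))))
        = Fr + s • (L⁻¹ • CV) := by
    intro s
    have hterm : ∀ m : Fin M,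
        w m • (((F (c2 i + t m.succ • c2 r) + s • v (c2 i + t m.succ • c2 r))
            - (F (c2 i + t m.castSucc • c2 r) + s • v (c2 i + t m.castSucc • c2 r))))
          = (w m * (t m.succ - t m.castSucc)) • Fr
            + s • (w m • (v (c2 i + t m.succ • c2 r) - v (c2 i + t m.castSucc • c2 r))) := by
      intro m
      have h1 : ((F (c2 i + t m.succ • c2 r) + s • v (c2 i + t m.succ • c2 r))
            - (F (c2 i + t m.castSucc • c2 r) + s • v (c2 i + t m.castSucc • c2 r)))
          = (t m.succ - t m.castSucc) • Fr
            + s • (v (c2 i + t m.succ • c2 r) - v (c2 i + t m.castSucc • c2 r)) := by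
        rw [← hFdiff m, smul_sub]
        abel
      rw [h1, smul_add, smul_smul, smul_comm (w m) s]
    rw [Finset.sum_congr rfl (fun m _ => hterm m), Finset.sum_add_distrib,
      ← Finset.sum_smul, ← Finset.smul_sum, ← hCV, ← hL, smul_add, smul_smul,
      inv_mul_cancel₀ hLpos.ne', one_smul, smul_comm]
  -- derivative of the atomistic term
  have hA : HasDerivAt
      (fun s : ℝ => L * φ (L⁻¹ • ∑ m, w m •
          (((F (c2 i + t m.succ • c2 r) + s • v (c2 i + t m.succ • c2 r))
            - (F (c2 i + t m.castSucc • c2 r) + s • v (c2 i + t m.castSucc • c2 r))))))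
      (D CV) 0 := by
    have h1 : HasDerivAt (fun s : ℝ => L * φ (Fr + s • (L⁻¹ • CV)))
        (L * D (L⁻¹ • CV)) 0 := (hchain (L⁻¹ • CV)).const_mul L
    have h2 : L * D (L⁻¹ • CV) = D CV := by
      rw [_root_.map_smul, smul_eq_mul, ← mul_assoc, mul_inv_cancel₀ hLpos.ne', one_mul]
    rw [← h2]
    refine h1.congr_of_eventuallyEq ?_
    filter_upwards with s
    rw [hAeq s]
  -- derivative of the continuum term
  have hC : HasDerivAt
      (fun s : ℝ => ∑ m : Fin M, (t m.succ - t m.castSucc) * ((1 - w m) * φ (Fr + s • a m)))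
      (∑ m : Fin M, (t m.succ - t m.castSucc) * ((1 - w m) * D (a m))) 0 := by
    refine HasDerivAt.fun_sum fun m _ => ?_
    exact ((hchain (a m)).const_mul (1 - w m)).const_mul (t m.succ - t m.castSucc)
  -- the total derivative equals the telescoped expression
  have htotal : D CV + ∑ m : Fin M, (t m.succ - t m.castSucc) * ((1 - w m) * D (a m))
      = D (v (c2 (i + r)) - v (c2 i)) := by
    have h1 : D CV = ∑ m : Fin M, w m * ((t m.succ - t m.castSucc) * D (a m)) := by
      rw [hCV, map_sum]
      refine Finset.sum_congr rfl fun m _ => ?_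
      rw [hvdiff m, _root_.map_smul, _root_.map_smul, smul_eq_mul, smul_eq_mul]
    have h2 : v (c2 (i + r)) - v (c2 i)
        = ∑ m : Fin M, (t m.succ - t m.castSucc) • a m := by
      have h3 : ∀ m : Fin M, (t m.succ - t m.castSucc) • a m
          = v (c2 i + τ (m.1 + 1) • c2 r) - v (c2 i + τ m.1 • c2 r) := by
        intro m
        rw [hτc m, hτs m, hvdiff m]
      rw [Finset.sum_congr rfl (fun m _ => h3 m),
        Fin.sum_univ_eq_sum_range (fun k => v (c2 i + τ (k+1) • c2 r) - v (c2 i + τ k • c2 r)) M,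
        Finset.sum_range_sub (fun k => v (c2 i + τ k • c2 r)) M, hτ0, hτM]
      rw [hc2add, one_smul, zero_smul, add_zero]
    rw [h1, h2, map_sum]
    rw [Finset.sum_congr rfl (fun m _ => by rw [_root_.map_smul, smul_eq_mul] :
      ∀ m ∈ Finset.univ, D ((t m.succ - t m.castSucc) • a m)
        = (t m.succ - t m.castSucc) * D (a m)), ← Finset.sum_add_distrib]
    refine Finset.sum_congr rfl fun m _ => ?_
    ring
  constructor
  · -- first conjunct
    have hfin := hA.add hC
    rw [htotal] at hfin
    refine hfin.congr_of_eventuallyEq ?_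
    filter_upwards with s
    rw [hsum s]
    rfl
  · -- second conjunct
    have heq : (fun s : ℝ =>
        φ ((F (c2 (i + r)) + s • v (c2 (i + r))) - (F (c2 i) + s • v (c2 i))))
        = fun s : ℝ => φ (Fr + s • (v (c2 (i + r)) - v (c2 i))) := by
      funext s
      congr 1
      rw [hc2add, map_add, hFr, smul_sub]
      abel
    rw [heq]
    exact hchain _
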